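/- For all real numbers a, b with 1 < a < b, one has f(a,b) > g(a,b), where f(a,b) = ∫_{1}^{a} (2z−a+b)/√((z²−1)(a−z)(b+z)) dz and g(a,b) = ∫_{1}^{b} (2z+a−b)/√((z²−1)(a+z)(b−z)) dz. -/

import Mathlib

open MeasureTheory intervalIntegral Real Filter Topology Set

set_option maxHeartbeats 1000000 in
lemma keypoly (a b s : ℝ) (ha : 1 < a) (hab : a < b) (h0 : 0 ≤ s) (h1 : s ≤ 1)
    (hc : 0 ≤ 2 * (1 + (b - 1) * s) + a - b) :
    (2 * (1 + (b - 1) * s) + a - b) ^ 2 * ((1 + (a - 1) * s + 1) * (b + (1 + (a - 1) * s)))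
      < (2 * (1 + (a - 1) * s) - a + b) ^ 2 * ((1 + (b - 1) * s + 1) * (a + (1 + (b - 1) * s))) := by
  have hp : (0:ℝ) ≤ a - 1 := by linarith
  have hd : (0:ℝ) ≤ b - a := by linarith
  have hd0 : (0:ℝ) < b - a := by linarith
  have ht : (0:ℝ) ≤ 1 - s := by linarith
  have t00 : (0:ℝ) ≤ (b-a)*(2 * (1 + (b - 1) * s) + a - b) := mul_nonneg hd hc
  have t01 : (0:ℝ) ≤ (b-a)*(1-s) := mul_nonneg hd ht
  have t02 : (0:ℝ) ≤ (b-a)*(1-s)*(2 * (1 + (b - 1) * s) + a - b) := mul_nonneg (mul_nonneg hd ht) hc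
  have t03 : (0:ℝ) ≤ (b-a)^2 := sq_nonneg _
  have t04 : (0:ℝ) ≤ (b-a)^2*(2 * (1 + (b - 1) * s) + a - b) := mul_nonneg (sq_nonneg _) hc
  have t05 : (0:ℝ) ≤ (b-a)^2*(2 * (1 + (b - 1) * s) + a - b)^2 := mul_nonneg (sq_nonneg _) (sq_nonneg _)
  have t06 : (0:ℝ) ≤ (b-a)^3 := pow_nonneg hd 3
  have t07 : (0:ℝ) ≤ (b-a)^3*(2 * (1 + (b - 1) * s) + a - b) := mul_nonneg (pow_nonneg hd 3) hc
  have t08 : (0:ℝ) ≤ (b-a)^4 := pow_nonneg hd 4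
  have t09 : (0:ℝ) ≤ (b-a)^2*(1-s)*(2 * (1 + (b - 1) * s) + a - b) := mul_nonneg (mul_nonneg (sq_nonneg _) ht) hc
  have t10 : (0:ℝ) ≤ (a-1)*(b-a) := mul_nonneg hp hd
  have t11 : (0:ℝ) ≤ (a-1)*(b-a)*(2 * (1 + (b - 1) * s) + a - b) := mul_nonneg (mul_nonneg hp hd) hc
  have t12 : (0:ℝ) ≤ (a-1)*(b-a)*(2 * (1 + (b - 1) * s) + a - b)^2 := mul_nonneg (mul_nonneg hp hd) (sq_nonneg _)
  have t13 : (0:ℝ) ≤ (a-1)*(b-a)^2 := mul_nonneg hp (sq_nonneg _)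
  have t14 : (0:ℝ) ≤ (a-1)*(b-a)^2*(2 * (1 + (b - 1) * s) + a - b) := mul_nonneg (mul_nonneg hp (sq_nonneg _)) hc
  have t15 : (0:ℝ) ≤ (a-1)*(b-a)^3 := mul_nonneg hp (pow_nonneg hd 3)
  have t16 : (0:ℝ) ≤ (a-1)*(b-a)*s := mul_nonneg (mul_nonneg hp hd) h0
  have t17 : (0:ℝ) ≤ (a-1)*(b-a)*s*(1-s) := mul_nonneg (mul_nonneg (mul_nonneg hp hd) h0) ht
  have t18 : (0:ℝ) ≤ (a-1)*(b-a)*s*(1-s)*(2 * (1 + (b - 1) * s) + a - b) := mul_nonneg (mul_nonneg (mul_nonneg (mul_nonneg hp hd) h0) ht) hc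
  have t19 : (0:ℝ) ≤ (a-1)^2*(b-a)*s := mul_nonneg (mul_nonneg (sq_nonneg _) hd) h0
  have t20 : (0:ℝ) ≤ (a-1)^2*(b-a)^2*s := mul_nonneg (mul_nonneg (sq_nonneg _) (sq_nonneg _)) h0
  have t21 : (0:ℝ) ≤ (a-1)^2*(b-a)*s*(2 * (1 + (b - 1) * s) + a - b) := mul_nonneg (mul_nonneg (mul_nonneg (sq_nonneg _) hd) h0) hc
  have t22 : (0:ℝ) ≤ (a-1)^3*(b-a)*s^2 := mul_nonneg (mul_nonneg (pow_nonneg hp 3) hd) (sq_nonneg _)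
  linarith [t00, t01, t02, t03, t04, t05, t06, t07, t08, t09, t10, t11, t12, t13, t14, t15, t16, t17, t18, t19, t20, t21, t22, hd0]
lemma point (a b s : ℝ) (ha : 1 < a) (hab : a < b) (h0 : 0 ≤ s) (h1 : s ≤ 1) :
    2 * (2 * (1 + (b - 1) * s) + a - b) / Real.sqrt ((1 + (b - 1) * s + 1) * (a + (1 + (b - 1) * s)))
      < 2 * (2 * (1 + (a - 1) * s) - a + b) / Real.sqrt ((1 + (a - 1) * s + 1) * (b + (1 + (a - 1) * s))) := by
  have has : 0 ≤ (a - 1) * s := mul_nonneg (by linarith) h0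
  have hbs : 0 ≤ (b - 1) * s := mul_nonneg (by linarith) h0
  have hDu : (0:ℝ) < (1 + (a - 1) * s + 1) * (b + (1 + (a - 1) * s)) :=
    mul_pos (by linarith) (by linarith)
  have hDv : (0:ℝ) < (1 + (b - 1) * s + 1) * (a + (1 + (b - 1) * s)) :=
    mul_pos (by linarith) (by linarith)
  have hsu : 0 < Real.sqrt ((1 + (a - 1) * s + 1) * (b + (1 + (a - 1) * s))) := Real.sqrt_pos.2 hDu
  have hsv : 0 < Real.sqrt ((1 + (b - 1) * s + 1) * (a + (1 + (b - 1) * s))) := Real.sqrt_pos.2 hDv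
  have hNf : (0:ℝ) < 2 * (1 + (a - 1) * s) - a + b := by nlinarith [has]
  rcases le_or_gt (2 * (1 + (b - 1) * s) + a - b) 0 with hNg | hNg
  · calc 2 * (2 * (1 + (b - 1) * s) + a - b) / Real.sqrt ((1 + (b - 1) * s + 1) * (a + (1 + (b - 1) * s)))
        ≤ 0 := div_nonpos_of_nonpos_of_nonneg (by linarith) hsv.le
      _ < _ := div_pos (by linarith) hsu
  · rw [div_lt_div_iff₀ hsv hsu]
    have key := keypoly a b s ha hab h0 h1 hNg.le
    have e1 : (2 * (1 + (b - 1) * s) + a - b) * Real.sqrt ((1 + (a - 1) * s + 1) * (b + (1 + (a - 1) * s)))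
        = Real.sqrt ((2 * (1 + (b - 1) * s) + a - b) ^ 2 * ((1 + (a - 1) * s + 1) * (b + (1 + (a - 1) * s)))) := by
      rw [Real.sqrt_mul (sq_nonneg _), Real.sqrt_sq hNg.le]
    have e2 : (2 * (1 + (a - 1) * s) - a + b) * Real.sqrt ((1 + (b - 1) * s + 1) * (a + (1 + (b - 1) * s)))
        = Real.sqrt ((2 * (1 + (a - 1) * s) - a + b) ^ 2 * ((1 + (b - 1) * s + 1) * (a + (1 + (b - 1) * s)))) := by
      rw [Real.sqrt_mul (sq_nonneg _), Real.sqrt_sq hNf.le]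
    have : (2 * (1 + (b - 1) * s) + a - b) * Real.sqrt ((1 + (a - 1) * s + 1) * (b + (1 + (a - 1) * s)))
        < (2 * (1 + (a - 1) * s) - a + b) * Real.sqrt ((1 + (b - 1) * s + 1) * (a + (1 + (b - 1) * s))) := by
      rw [e1, e2]; exact Real.sqrt_lt_sqrt (by positivity) key
    nlinarith [this, hsu, hsv]
-- algebraic identity for the integrand after substitution z = 1+(c-1)*st^2
lemma integrand_aux (c m e st ct : ℝ) (hc : 1 < c) (hm : 0 < m) (hst : 0 < st) (hct : 0 < ct)
    (hpy : st ^ 2 + ct ^ 2 = 1) :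
    |(c - 1) * (2 * st * ct)| *
        ((2 * (1 + (c - 1) * st ^ 2) + e) /
          Real.sqrt (((1 + (c - 1) * st ^ 2) ^ 2 - 1) * (c - (1 + (c - 1) * st ^ 2)) *
            (m + (1 + (c - 1) * st ^ 2))))
      = 2 * (2 * (1 + (c - 1) * st ^ 2) + e) /
          Real.sqrt ((1 + (c - 1) * st ^ 2 + 1) * (m + (1 + (c - 1) * st ^ 2))) := by
  have hc1 : (0:ℝ) < c - 1 := by linarith
  have hX : 0 < (c - 1) * (st * ct) := by positivity
  have hsq : 0 ≤ (c - 1) * st ^ 2 := by positivity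
  have hY : (0:ℝ) < (1 + (c - 1) * st ^ 2 + 1) * (m + (1 + (c - 1) * st ^ 2)) := by
    apply mul_pos <;> nlinarith
  have hkey : ((1 + (c - 1) * st ^ 2) ^ 2 - 1) * (c - (1 + (c - 1) * st ^ 2)) *
        (m + (1 + (c - 1) * st ^ 2))
      = ((c - 1) * (st * ct)) ^ 2 *
        ((1 + (c - 1) * st ^ 2 + 1) * (m + (1 + (c - 1) * st ^ 2))) := by
    linear_combination (-((c - 1) ^ 2 * st ^ 2 * ((1 + (c - 1) * st ^ 2 + 1) *
      (m + (1 + (c - 1) * st ^ 2))))) * hpy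
  rw [hkey, Real.sqrt_mul (sq_nonneg _), Real.sqrt_sq hX.le,
    abs_of_pos (show (0:ℝ) < (c - 1) * (2 * st * ct) by positivity)]
  have hsY : 0 < Real.sqrt ((1 + (c - 1) * st ^ 2 + 1) * (m + (1 + (c - 1) * st ^ 2))) :=
    Real.sqrt_pos.2 hY
  field_simp

lemma subst (c m e : ℝ) (hc : 1 < c) (hm : 0 < m) :
    (∫ z in (1:ℝ)..c, (2 * z + e) / Real.sqrt ((z ^ 2 - 1) * (c - z) * (m + z)))
      = ∫ θ in (0:ℝ)..(π / 2),
          2 * (2 * (1 + (c - 1) * sin θ ^ 2) + e) /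
            Real.sqrt ((1 + (c - 1) * sin θ ^ 2 + 1) * (m + (1 + (c - 1) * sin θ ^ 2))) := by
  have hpi : (0:ℝ) ≤ π / 2 := by positivity
  have hc1 : (0:ℝ) < c - 1 := by linarith
  set φ : ℝ → ℝ := fun θ => 1 + (c - 1) * sin θ ^ 2 with hφ
  set φ' : ℝ → ℝ := fun θ => (c - 1) * (2 * sin θ * cos θ) with hφ'
  have hmono : StrictMonoOn φ (Icc 0 (π / 2)) := by
    intro x hx y hy hxy
    have hsx : 0 ≤ sin x := sin_nonneg_of_nonneg_of_le_pi hx.1 (by linarith [hx.2, pi_pos.le])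
    have h : sin x < sin y := by
      apply strictMonoOn_sin ⟨by linarith [hx.1, pi_pos.le], hx.2⟩
        ⟨by linarith [hy.1, pi_pos.le], hy.2⟩ hxy
    have : sin x ^ 2 < sin y ^ 2 := by nlinarith
    simp only [hφ]
    nlinarith
  have hderiv : ∀ θ ∈ Icc (0:ℝ) (π / 2), HasDerivWithinAt φ (φ' θ) (Icc 0 (π / 2)) θ := by
    intro θ _
    have h1 : HasDerivAt (fun x : ℝ => sin x ^ 2) (2 * sin θ ^ 1 * cos θ) θ :=
      (Real.hasDerivAt_sin θ).pow 2 |>.congr_deriv (by norm_num)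
    have h2 : HasDerivAt φ ((c - 1) * (2 * sin θ * cos θ)) θ := by
      have := (h1.const_mul (c - 1)).const_add 1
      simpa [hφ, pow_one, mul_assoc] using this
    exact h2.hasDerivWithinAt
  have himg : φ '' Icc 0 (π / 2) = Icc 1 c := by
    apply Subset.antisymm
    · rintro z ⟨θ, hθ, rfl⟩
      have hs0 : 0 ≤ sin θ ^ 2 := sq_nonneg _
      have hs1 : sin θ ^ 2 ≤ 1 := sin_sq_le_one θ
      constructor <;> simp only [hφ] <;> nlinarith
    · intro z hz
      have h01 : 0 ≤ (z - 1) / (c - 1) := div_nonneg (by linarith [hz.1]) hc1.le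
      have h11 : (z - 1) / (c - 1) ≤ 1 := (div_le_one hc1).2 (by linarith [hz.2])
      refine ⟨arcsin (Real.sqrt ((z - 1) / (c - 1))), ⟨arcsin_nonneg.2 (Real.sqrt_nonneg _), ?_⟩, ?_⟩
      · exact arcsin_le_pi_div_two _
      · have hr1 : Real.sqrt ((z - 1) / (c - 1)) ≤ 1 := Real.sqrt_le_one.2 h11
        have : sin (arcsin (Real.sqrt ((z - 1) / (c - 1)))) = Real.sqrt ((z - 1) / (c - 1)) :=
          Real.sin_arcsin (by linarith [Real.sqrt_nonneg ((z - 1) / (c - 1))]) hr1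
        simp only [hφ, this, Real.sq_sqrt h01]
        field_simp
        ring
  have hinj : InjOn φ (Icc 0 (π / 2)) := hmono.injOn
  rw [intervalIntegral.integral_of_le hc.le, intervalIntegral.integral_of_le hpi,
    ← MeasureTheory.integral_Icc_eq_integral_Ioc, ← MeasureTheory.integral_Icc_eq_integral_Ioc,
    ← himg,
    MeasureTheory.integral_image_eq_integral_abs_deriv_smul measurableSet_Icc hderiv hinj,
    MeasureTheory.integral_Icc_eq_integral_Ioc, MeasureTheory.integral_Ioc_eq_integral_Ioo,
    MeasureTheory.integral_Icc_eq_integral_Ioc, MeasureTheory.integral_Ioc_eq_integral_Ioo]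
  apply MeasureTheory.setIntegral_congr_fun measurableSet_Ioo
  intro θ hθ
  have hst : 0 < sin θ := sin_pos_of_pos_of_lt_pi hθ.1 (by linarith [hθ.2, pi_pos])
  have hct : 0 < cos θ := cos_pos_of_mem_Ioo ⟨by linarith [hθ.1, pi_pos], hθ.2⟩
  have := integrand_aux c m e (sin θ) (cos θ) hc hm hst hct (sin_sq_add_cos_sq θ)
  simpa [hφ, hφ', smul_eq_mul] using this

/-- `f(a,b) = ∫₁ᵃ (2z−a+b)/√((z²−1)(a−z)(b+z)) dz`. -/
noncomputable def f (a b : ℝ) : ℝ :=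
  ∫ z in (1:ℝ)..a, (2 * z - a + b) / Real.sqrt ((z ^ 2 - 1) * (a - z) * (b + z))

/-- `g(a,b) = ∫₁ᵇ (2z+a−b)/√((z²−1)(a+z)(b−z)) dz`. -/
noncomputable def g (a b : ℝ) : ℝ :=
  ∫ z in (1:ℝ)..b, (2 * z + a - b) / Real.sqrt ((z ^ 2 - 1) * (a + z) * (b - z))

/-- For all `1 < a < b` one has `f(a,b) > g(a,b)`. -/
theorem stmt8 (a b : ℝ) (ha : 1 < a) (hab : a < b) : f a b > g a b := by
  have hb1 : (1:ℝ) < b := ha.trans hab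
  have ha0 : (0:ℝ) ≤ a - 1 := by linarith
  have hb0 : (0:ℝ) ≤ b - 1 := by linarith
  -- rewrite f via the substitution
  have hf : f a b = ∫ θ in (0:ℝ)..(π / 2),
      2 * (2 * (1 + (a - 1) * sin θ ^ 2) - a + b) /
        Real.sqrt ((1 + (a - 1) * sin θ ^ 2 + 1) * (b + (1 + (a - 1) * sin θ ^ 2))) := by
    have h1 : f a b = ∫ z in (1:ℝ)..a, (2 * z + (b - a)) /
        Real.sqrt ((z ^ 2 - 1) * (a - z) * (b + z)) := by
      unfold f
      apply intervalIntegral.integral_congr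
      intro z _
      ring_nf
    rw [h1, subst a b (b - a) ha (by linarith)]
    apply intervalIntegral.integral_congr
    intro θ _
    ring_nf
  have hg : g a b = ∫ θ in (0:ℝ)..(π / 2),
      2 * (2 * (1 + (b - 1) * sin θ ^ 2) + a - b) /
        Real.sqrt ((1 + (b - 1) * sin θ ^ 2 + 1) * (a + (1 + (b - 1) * sin θ ^ 2))) := by
    have h1 : g a b = ∫ z in (1:ℝ)..b, (2 * z + (a - b)) /
        Real.sqrt ((z ^ 2 - 1) * (b - z) * (a + z)) := by
      unfold g
      apply intervalIntegral.integral_congr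
      intro z _
      show (2 * z + a - b) / Real.sqrt ((z ^ 2 - 1) * (a + z) * (b - z))
          = (2 * z + (a - b)) / Real.sqrt ((z ^ 2 - 1) * (b - z) * (a + z))
      rw [show (z ^ 2 - 1) * (a + z) * (b - z) = (z ^ 2 - 1) * (b - z) * (a + z) from by ring]
      ring_nf
    rw [h1, subst b a (a - b) hb1 (by linarith)]
    apply intervalIntegral.integral_congr
    intro θ _
    ring_nf
  have hcontF : Continuous fun θ : ℝ =>
      2 * (2 * (1 + (a - 1) * sin θ ^ 2) - a + b) /
        Real.sqrt ((1 + (a - 1) * sin θ ^ 2 + 1) * (b + (1 + (a - 1) * sin θ ^ 2))) := by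
    apply Continuous.div
    · fun_prop
    · exact Real.continuous_sqrt.comp (by fun_prop)
    · intro x
      refine ne_of_gt (Real.sqrt_pos.2 (mul_pos ?_ ?_)) <;>
        nlinarith [mul_nonneg ha0 (sq_nonneg (sin x)), sin_sq_le_one x]
  have hcontG : Continuous fun θ : ℝ =>
      2 * (2 * (1 + (b - 1) * sin θ ^ 2) + a - b) /
        Real.sqrt ((1 + (b - 1) * sin θ ^ 2 + 1) * (a + (1 + (b - 1) * sin θ ^ 2))) := by
    apply Continuous.div
    · fun_prop
    · exact Real.continuous_sqrt.comp (by fun_prop)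
    · intro x
      refine ne_of_gt (Real.sqrt_pos.2 (mul_pos ?_ ?_)) <;>
        nlinarith [mul_nonneg hb0 (sq_nonneg (sin x)), sin_sq_le_one x]
  have hFint : IntervalIntegrable (fun θ : ℝ =>
      2 * (2 * (1 + (a - 1) * sin θ ^ 2) - a + b) /
        Real.sqrt ((1 + (a - 1) * sin θ ^ 2 + 1) * (b + (1 + (a - 1) * sin θ ^ 2)))) volume 0 (π / 2) :=
    hcontF.intervalIntegrable 0 (π / 2)
  have hGint : IntervalIntegrable (fun θ : ℝ =>
      2 * (2 * (1 + (b - 1) * sin θ ^ 2) + a - b) /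
        Real.sqrt ((1 + (b - 1) * sin θ ^ 2 + 1) * (a + (1 + (b - 1) * sin θ ^ 2)))) volume 0 (π / 2) :=
    hcontG.intervalIntegrable 0 (π / 2)
  rw [gt_iff_lt, ← sub_pos, hf, hg, ← intervalIntegral.integral_sub hFint hGint]
  apply intervalIntegral.intervalIntegral_pos_of_pos_on (hFint.sub hGint)
  · intro x _
    exact sub_pos.2 (point a b (sin x ^ 2) ha hab (sq_nonneg _) (sin_sq_le_one x))
  · positivity
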